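/- arXiv:2307.06386 — 3 statements merged into one kernel-verified Lean document; each statement's English description precedes it below -/
import Mathlib

section
/- For all n ≥ 1, |N_n - a·α^n| < α^(-n/2), where α is the real root of x^3 - x^2 - 1 and a = α^2/(α^3 + 2). -/
def narayana : ℕ → ℕ
  | 0 => 0
  | 1 => 1
  | 2 => 1
  | n + 3 => narayana (n + 2) + narayana n

/-- Error term of the Narayana sequence against its dominant geometric term. -/
def narayanaErr (α a : ℝ) (k : ℕ) : ℝ := (narayana k : ℝ) - a * α ^ k

theorem narayana_dominant_term (α : ℝ) (hα1 : 1 < α) (hroot : α ^ 3 = α ^ 2 + 1)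
    (n : ℕ) (hn : 1 ≤ n) :
    |(narayana n : ℝ) - α ^ 2 / (α ^ 3 + 2) * α ^ n| < α ^ (-(n : ℝ) / 2) := by
  have hα0 : (0:ℝ) < α := lt_trans one_pos hα1
  have hαne : α ≠ 0 := ne_of_gt hα0
  set a : ℝ := α ^ 2 / (α ^ 3 + 2) with ha
  have hden : α ^ 3 + 2 ≠ 0 := by positivity
  have hae : a * (α ^ 3 + 2) = α ^ 2 := by
    rw [ha]; field_simp
  have hav : a = α ^ 2 / (α ^ 2 + 3) := by
    rw [ha, show α ^ 3 + 2 = α ^ 2 + 3 by linarith]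
  set e : ℕ → ℝ := narayanaErr α a with he
  have h0 : e 0 = -a := by simp [he, narayanaErr, narayana]
  have h1 : e 1 = 1 - a * α := by simp [he, narayanaErr, narayana]
  have h2 : e 2 = 1 - a * α ^ 2 := by norm_num [he, narayanaErr, narayana]
  have hcub : ∀ k, e (k+3) = e (k+2) + e k := by
    intro k
    simp only [he, narayanaErr, show narayana (k+3) = narayana (k+2) + narayana k from rfl]
    push_cast
    linear_combination (-(a * α ^ k)) * hroot
  have hquad : ∀ k, α * e (k+2) = (α - α^2) * e (k+1) - e k := by
    intro k
    induction k with
    | zero =>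
      rw [h0, h1, h2]
      linear_combination (-1 : ℝ) * hae + (-a) * hroot
    | succ m ih =>
      linear_combination α * hcub m + α * ih + (-(e (m+1))) * hroot
  set Q : ℕ → ℝ := fun k => (e k)^2 + α*(α-1) * (e k) * (e (k+1)) + α*(e (k+1))^2
    with hQ
  have hQrec : ∀ k, α * Q (k+1) = Q k := by
    intro k
    simp only [hQ]
    linear_combination (α * e (k+2) - e k) * hquad k
  have hQn : ∀ k, Q k = (1/α)^k * Q 0 := by
    intro k
    induction k with
    | zero => simp
    | succ m ih =>
      have hm : Q (m+1) = (1/α) * Q m := by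
        field_simp
        linear_combination hQrec m
      rw [hm, ih]; ring
  have hd : (0:ℝ) < 1 - α*(α-1)^2/4 := by nlinarith
  have hkey : Q 0 < 1 - α*(α-1)^2/4 := by
    rw [← sub_pos]
    have hs : (0:ℝ) < α ^ 2 + 3 := by positivity
    have hexp : 1 - α*(α-1)^2/4 - Q 0 =
        (27*α^2 - 12*α + 27
          + (-9*α^4 + 9*α^3 - 6*α^2 + 33*α - 9) * (α^3 - α^2 - 1))
          / (4*(α^2+3)^2) := by
      simp only [hQ]
      rw [h0, h1, hav]
      field_simp
      ring
    rw [hexp, show α^3 - α^2 - 1 = 0 by linarith]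
    apply div_pos
    · nlinarith [sq_nonneg (3*α - 2)]
    · positivity
  have hmain : ∀ k, (e k)^2 < (1/α)^k := by
    intro k
    have h6 : (e k)^2 * (1 - α*(α-1)^2/4) ≤ Q k := by
      simp only [hQ]
      nlinarith [mul_nonneg hα0.le (sq_nonneg (e (k+1) + (α-1) * e k / 2))]
    have h7 : (0:ℝ) < (1/α)^k := by positivity
    have h8 : Q k < (1/α)^k * (1 - α*(α-1)^2/4) := by
      rw [hQn k]; exact mul_lt_mul_of_pos_left hkey h7
    exact (mul_lt_mul_iff_left₀ hd).mp (lt_of_le_of_lt h6 h8)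
  have hbpos : (0:ℝ) < α ^ (-(n : ℝ) / 2) := Real.rpow_pos_of_pos hα0 _
  have hb2 : (α ^ (-(n : ℝ) / 2)) ^ 2 = (1/α)^n := by
    rw [← Real.rpow_natCast (α ^ (-(n : ℝ) / 2)) 2, ← Real.rpow_mul hα0.le]
    rw [show -(n : ℝ) / 2 * (2:ℕ) = -(n:ℝ) by push_cast; ring]
    rw [Real.rpow_neg hα0.le, Real.rpow_natCast]
    rw [one_div, inv_pow]
  show |e n| < α ^ (-(n : ℝ) / 2)
  have h9 : (e n)^2 < (α ^ (-(n : ℝ) / 2))^2 := by rw [hb2]; exact hmain n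
  exact abs_lt_of_sq_lt_sq h9 hbpos.le
end

section
/- If r ≥ 1, H > (4r^2)^r, and H > L/(log L)^r for a real L > e, then L < 2^r · H · (log H)^r. -/
lemma log_le_div_exp_aux {t : ℝ} (ht : 0 < t) : Real.log t ≤ t / Real.exp 1 := by
  have h1 : Real.log (t / Real.exp 1) ≤ t / Real.exp 1 - 1 :=
    Real.log_le_sub_one_of_pos (by positivity)
  have h2 : Real.log (t / Real.exp 1) = Real.log t - 1 := by
    rw [Real.log_div (ne_of_gt ht) (ne_of_gt (Real.exp_pos 1)), Real.log_exp]
  linarith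

theorem sanchez_luca (r : ℕ) (H L : ℝ) (hr : 1 ≤ r)
    (hH : H > (4 * (r : ℝ) ^ 2) ^ r) (hL : Real.exp 1 < L)
    (hHL : H > L / Real.log L ^ r) :
    L < 2 ^ r * H * Real.log H ^ r := by
  have hr1 : (1 : ℝ) ≤ r := by exact_mod_cast hr
  have he2 : (2 : ℝ) < Real.exp 1 := by
    have := Real.exp_one_gt_d9; linarith
  have heL : (0 : ℝ) < L := lt_trans (Real.exp_pos 1) hL
  have hlgL1 : 1 < Real.log L := by
    have := Real.log_lt_log (Real.exp_pos 1) hL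
    rwa [Real.log_exp] at this
  have hlgLpos : 0 < Real.log L := by linarith
  have hA4 : (4 : ℝ) ≤ 4 * (r : ℝ) ^ 2 := by nlinarith
  have hApos : (0 : ℝ) < 4 * (r : ℝ) ^ 2 := by linarith
  have hHpos : 0 < H := lt_trans (by positivity) hH
  have hlgH_lb : (r : ℝ) * Real.log (4 * (r : ℝ) ^ 2) < Real.log H := by
    have := Real.log_lt_log (by positivity) hH
    rwa [Real.log_pow] at this
  have hlog4 : (1 : ℝ) < Real.log (4 * (r : ℝ) ^ 2) := by
    have he4 : Real.exp 1 < 4 := by have := Real.exp_one_lt_d9; linarith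
    have h4 : Real.log (Real.exp 1) < Real.log (4 * (r : ℝ) ^ 2) :=
      Real.log_lt_log (Real.exp_pos 1) (by linarith)
    rwa [Real.log_exp] at h4
  have hlgHpos : 0 < Real.log H := by nlinarith
  -- L < H * (log L)^r
  have hLH : L < H * Real.log L ^ r := by
    have hpow : (0 : ℝ) < Real.log L ^ r := by positivity
    calc L = L / Real.log L ^ r * Real.log L ^ r := by field_simp
    _ < H * Real.log L ^ r := by exact mul_lt_mul_of_pos_right hHL hpow
  have hlog : Real.log L < Real.log H + (r : ℝ) * Real.log (Real.log L) := by
    have := Real.log_lt_log heL hLH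
    rwa [Real.log_mul (ne_of_gt hHpos) (by positivity), Real.log_pow] at this
  by_cases hcase : Real.log L < 2 * Real.log H
  · -- direct case
    have hpow : Real.log L ^ r < (2 * Real.log H) ^ r := by
      apply pow_lt_pow_left₀ hcase (le_of_lt hlgLpos)
      omega
    calc L < H * Real.log L ^ r := hLH
    _ < H * (2 * Real.log H) ^ r := by exact mul_lt_mul_of_pos_left hpow hHpos
    _ = 2 ^ r * H * Real.log H ^ r := by rw [mul_pow]; ring
  · exfalso
    push_neg at hcase
    -- log L < 2 r log log L
    have h1 : Real.log L < 2 * (r : ℝ) * Real.log (Real.log L) := by linarith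
    -- log L > 4 r^2
    have h2 : Real.log (4 * (r : ℝ) ^ 2) < Real.log (Real.log L) := by
      have : 2 * ((r : ℝ) * Real.log (4 * (r : ℝ) ^ 2)) < 2 * ((r:ℝ) * Real.log (Real.log L)) := by
        linarith
      have hrpos : (0 : ℝ) < r := by linarith
      nlinarith
    have h3 : 4 * (r : ℝ) ^ 2 < Real.log L := by
      have := Real.exp_lt_exp.mpr h2
      rwa [Real.exp_log hApos, Real.exp_log hlgLpos] at this
    set x := Real.log L with hxdef
    set s := Real.sqrt x with hsdef
    have hxpos : 0 < x := hlgLpos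
    have hspos : 0 < s := Real.sqrt_pos.mpr hxpos
    have hs2r : 2 * (r : ℝ) < s := by
      have h5 : Real.sqrt (4 * (r : ℝ) ^ 2) < s := by
        exact Real.sqrt_lt_sqrt (le_of_lt hApos) h3
      have h6 : Real.sqrt (4 * (r : ℝ) ^ 2) = 2 * r := by
        rw [show (4 * (r : ℝ) ^ 2) = (2 * r) ^ 2 by ring, Real.sqrt_sq (by positivity)]
      linarith
    have hss : s * s = x := Real.mul_self_sqrt (le_of_lt hxpos)
    have hlogx : Real.log x = 2 * Real.log s := by
      rw [hsdef, Real.log_sqrt (le_of_lt hxpos)]; ring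
    have hle : Real.log s ≤ s / Real.exp 1 := log_le_div_exp_aux hspos
    have hfin : 2 * (r : ℝ) * Real.log x < x := by
      have hd : s / Real.exp 1 < s / 2 := by
        apply div_lt_div_of_pos_left hspos (by norm_num) he2
      have : Real.log s < s / 2 := lt_of_le_of_lt hle hd
      calc 2 * (r : ℝ) * Real.log x = 4 * r * Real.log s := by rw [hlogx]; ring
      _ < 4 * r * (s / 2) := by
          apply mul_lt_mul_of_pos_left this (by nlinarith)
      _ = 2 * r * s := by ring
      _ < s * s := by exact mul_lt_mul_of_pos_right hs2r hspos
      _ = x := hss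
    linarith
end

section
/- Let α > 1 be the real root of x^3 - x^2 - 1 and a = α^2/(α^3+2). For integers g ≥ 2, k ≥ 1, and ℓ+m+n ≥ 3 with 1 ≤ d1,d2,d3 ≤ g-1, the quantity a·(g-1)^3/(d1·d2·d3) · α^k · g^{-(ℓ+m+n)} is never equal to 1. -/
open Polynomial

noncomputable def fZ : ℤ[X] := X ^ 3 - X ^ 2 - 1

lemma fZ_monic : fZ.Monic := by
  unfold fZ; monicity!

lemma fZ_natDegree : fZ.natDegree = 3 := by
  unfold fZ; compute_degree!

lemma fZ_no_rat_root (x : ℚ) : aeval x fZ ≠ 0 := by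
  intro h
  obtain ⟨r, hr, hdvd⟩ := exists_integer_of_is_root_of_monic fZ_monic h
  have hc0 : fZ.coeff 0 = -1 := by unfold fZ; simp
  rw [hc0] at hdvd
  have hu : r = 1 ∨ r = -1 := Int.isUnit_iff.mp (isUnit_of_dvd_one (dvd_neg.mp hdvd))
  subst hr
  rcases hu with rfl | rfl <;> simp [fZ] at h <;> norm_num at h

noncomputable def fQ : ℚ[X] := X ^ 3 - X ^ 2 - 1

lemma fQ_eq_map : fQ = fZ.map (algebraMap ℤ ℚ) := by
  simp [fQ, fZ, Polynomial.map_sub, Polynomial.map_pow]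

lemma fQ_monic : fQ.Monic := by
  unfold fQ; monicity!

lemma fQ_natDegree : fQ.natDegree = 3 := by
  unfold fQ; compute_degree!

lemma fQ_irreducible : Irreducible fQ := by
  rw [irreducible_iff_roots_eq_zero_of_degree_le_three (by rw [fQ_natDegree]; norm_num)
    (by rw [fQ_natDegree])]
  rw [Multiset.eq_zero_iff_forall_notMem]
  intro x hx
  rw [mem_roots (fQ_monic.ne_zero)] at hx
  apply fZ_no_rat_root x
  have := hx.eq_zero
  rw [fQ_eq_map, eval_map] at this
  simpa [aeval_def] using this

lemma indep (α : ℝ) (hroot : α ^ 3 = α ^ 2 + 1) (p q r : ℚ)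
    (h : (p : ℝ) + q * α + r * α ^ 2 = 0) : p = 0 ∧ q = 0 ∧ r = 0 := by
  have haev : aeval α fQ = 0 := by
    simp [fQ, aeval_def]
    nlinarith [hroot]
  have hint : IsIntegral ℚ α := ⟨fQ, fQ_monic, by simpa [aeval_def] using haev⟩
  have hmin : minpoly ℚ α = fQ :=
    (minpoly.eq_of_irreducible_of_monic fQ_irreducible haev fQ_monic).symm
  set P : ℚ[X] := C p + C q * X + C r * X ^ 2 with hP
  have haevP : aeval α P = 0 := by
    simp [hP, map_add, map_mul]
    push_cast
    linarith [h]
  have hP0 : P = 0 := by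
    by_contra hne
    have hle : (minpoly ℚ α).degree ≤ P.degree := minpoly.degree_le_of_ne_zero ℚ α hne haevP
    have hdP : P.degree ≤ 2 := by
      rw [hP]; compute_degree
    have h3 : fQ.degree = 3 := by unfold fQ; compute_degree!
    rw [hmin, h3] at hle
    exact absurd (hle.trans hdP) (by norm_num)
  refine ⟨?_, ?_, ?_⟩
  · have := congrArg (fun Q => Polynomial.coeff Q 0) hP0; simpa [hP] using this
  · have := congrArg (fun Q => Polynomial.coeff Q 1) hP0; simpa [hP] using this
  · have := congrArg (fun Q => Polynomial.coeff Q 2) hP0; simpa [hP] using this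

def seqABC : ℕ → ℕ × ℕ × ℕ
  | 0 => (1, 0, 1)
  | j + 1 => ⟨(seqABC j).2.2, (seqABC j).1, (seqABC j).2.1 + (seqABC j).2.2⟩

lemma seqABC_pow (α : ℝ) (hroot : α ^ 3 = α ^ 2 + 1) :
    ∀ j, α ^ (j + 3) = (seqABC j).1 + (seqABC j).2.1 * α + (seqABC j).2.2 * α ^ 2 := by
  intro j
  induction j with
  | zero => norm_num [seqABC]; linarith [hroot]
  | succ j ih =>
      have : α ^ (j + 1 + 3) = α ^ (j + 3) * α := by ring
      rw [this, ih]
      simp only [seqABC]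
      push_cast
      nlinarith [hroot]

lemma seqABC_ac_pos : ∀ j, 1 ≤ (seqABC j).1 ∧ 1 ≤ (seqABC j).2.2 := by
  intro j
  induction j with
  | zero => simp [seqABC]
  | succ j ih => simp [seqABC]; omega

lemma seqABC_b_pos (j : ℕ) : 1 ≤ (seqABC (j + 1)).2.1 := by
  simp only [seqABC]; exact (seqABC_ac_pos j).1

theorem gamma_one_ne_zero (α : ℝ) (hα1 : 1 < α) (hroot : α ^ 3 = α ^ 2 + 1)
    (g k ℓ m n d1 d2 d3 : ℕ) (hg : 2 ≤ g) (hk : 1 ≤ k) (hlmn : 3 ≤ ℓ + m + n)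
    (hd1 : 1 ≤ d1) (hd1' : d1 ≤ g - 1)
    (hd2 : 1 ≤ d2) (hd2' : d2 ≤ g - 1)
    (hd3 : 1 ≤ d3) (hd3' : d3 ≤ g - 1) :
    α ^ 2 / (α ^ 3 + 2) * ((g : ℝ) - 1) ^ 3 / (d1 * d2 * d3) * α ^ k *
      (g : ℝ) ^ (-((ℓ : ℤ) + m + n)) ≠ 1 := by
  intro heq
  set L : ℕ := ℓ + m + n with hL
  -- basic positivity
  have hgR : (2 : ℝ) ≤ (g : ℝ) := by exact_mod_cast hg
  have hg1 : (0 : ℝ) < (g : ℝ) - 1 := by linarith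
  have hgpos : (0 : ℝ) < (g : ℝ) := by linarith
  have hd1R : (1 : ℝ) ≤ (d1 : ℝ) := by exact_mod_cast hd1
  have hd2R : (1 : ℝ) ≤ (d2 : ℝ) := by exact_mod_cast hd2
  have hd3R : (1 : ℝ) ≤ (d3 : ℝ) := by exact_mod_cast hd3
  have hα0 : (0 : ℝ) < α := by linarith
  have hden : (0 : ℝ) < α ^ 3 + 2 := by nlinarith
  -- rewrite the zpow
  have hz : (g : ℝ) ^ (-((ℓ : ℤ) + m + n)) = ((g : ℝ) ^ L)⁻¹ := by
    rw [show -((ℓ : ℤ) + m + n) = -(L : ℤ) by push_cast [hL]; ring]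
    rw [zpow_neg, zpow_natCast]
  rw [hz] at heq
  -- clear denominators
  have hgL : (0 : ℝ) < (g : ℝ) ^ L := by positivity
  have key : α ^ (k + 2) * ((g : ℝ) - 1) ^ 3 =
      (α ^ 2 + 3) * ((d1 : ℝ) * d2 * d3) * (g : ℝ) ^ L := by
    have h2 : α ^ 3 + 2 = α ^ 2 + 3 := by rw [hroot]; ring
    field_simp at heq
    rw [← h2]
    linear_combination heq
  -- rational q
  set q : ℚ := (d1 * d2 * d3 : ℚ) * (g : ℚ) ^ L / ((g : ℚ) - 1) ^ 3 with hq
  have hg1Q : ((g : ℚ) - 1) ≠ 0 := by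
    have : (2 : ℚ) ≤ (g : ℚ) := by exact_mod_cast hg
    intro h; rw [sub_eq_zero] at h; rw [h] at this; norm_num at this
  have hqR : (q : ℝ) = (d1 : ℝ) * d2 * d3 * (g : ℝ) ^ L / ((g : ℝ) - 1) ^ 3 := by
    rw [hq]; push_cast; ring
  have hne : ((g : ℝ) - 1) ≠ 0 := ne_of_gt hg1
  have key2 : α ^ (k + 2) = (q : ℝ) * α ^ 2 + 3 * q := by
    rw [hqR]
    field_simp
    linear_combination key
  -- the power expansion
  obtain ⟨j, rfl⟩ : ∃ j, k = j + 1 := ⟨k - 1, by omega⟩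
  have hpow := seqABC_pow α hroot j
  rw [show j + 1 + 2 = j + 3 from rfl] at key2
  rw [hpow] at key2
  set A := (seqABC j).1
  set B := (seqABC j).2.1
  set C := (seqABC j).2.2
  have hzero : (((A : ℚ) - 3 * q : ℚ) : ℝ) + ((B : ℚ) : ℝ) * α + (((C : ℚ) - q : ℚ) : ℝ) * α ^ 2 = 0 := by
    push_cast
    linarith [key2]
  obtain ⟨h1, h2, h3⟩ := indep α hroot _ _ _ hzero
  have hB : B = 0 := by exact_mod_cast h2
  have hAC : (A : ℚ) = 3 * C := by
    have e1 := sub_eq_zero.mp h1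
    have e3 := sub_eq_zero.mp h3
    linarith
  have hAC' : A = 3 * C := by exact_mod_cast hAC
  cases j with
  | zero => exact absurd hAC' (by decide)
  | succ j' => have := seqABC_b_pos j'; omega
end
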